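/- Let Ω be a finite transitive G-set and g ∈ G an element with exactly two orbits on Ω, of lengths ℓ₁ and ℓ₂. Suppose φ and ψ are congruences on Ω with no nontrivial common refinement and no nontrivial common coarsening, where g has two orbits of lengths a₁, a₂ on Ω/φ and one orbit of length b on Ω/ψ. Then gcd(a₁, b) = gcd(a₂, b) = 1 and Ω ≅ Ω/φ × Ω/ψ as G-sets. -/

import Mathlib

namespace Stmt13Aux

variable {G Ω : Type*} [Group G] [MulAction G Ω]

theorem zp (g : G) (n m : ℤ) (x : Ω) : g ^ n • g ^ m • x = g ^ (n + m) • x := by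
  rw [← mul_smul, ← zpow_add]

/-- Bundled hypotheses: `R` is an equivalence relation compatible with powers of `g`. -/
structure Compat (g : G) (R : Ω → Ω → Prop) : Prop where
  refl : ∀ z : Ω, R z z
  symm : ∀ {u v : Ω}, R u v → R v u
  trans : ∀ {u v w : Ω}, R u v → R v w → R u w
  comp : ∀ (n : ℤ) {u v : Ω}, R u v → R (g ^ n • u) (g ^ n • v)

namespace Compat

variable {R : Ω → Ω → Prop} {g : G} {x z : Ω}

theorem per_add (hR : Compat g R) {n m : ℤ} (h1 : R (g ^ n • x) x) (h2 : R (g ^ m • x) x) :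
    R (g ^ (n + m) • x) x := by
  have h3 := hR.comp m h1
  rw [zp] at h3
  rw [add_comm]
  exact hR.trans h3 h2

theorem per_neg (hR : Compat g R) {n : ℤ} (h : R (g ^ n • x) x) : R (g ^ (-n) • x) x := by
  have h2 := hR.comp (-n) (hR.symm h)
  rw [zp, neg_add_cancel, zpow_zero, one_smul] at h2
  exact h2

theorem per_mul (hR : Compat g R) {n : ℤ} (h : R (g ^ n • x) x) (k : ℤ) : R (g ^ (k * n) • x) x := by
  induction k using Int.induction_on with
  | zero => simpa using hR.refl x
  | succ i ih =>
      rw [show ((i : ℤ) + 1) * n = i * n + n by ring]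
      exact hR.per_add ih h
  | pred i ih =>
      rw [show (-(i : ℤ) - 1) * n = -(i : ℤ) * n + -n by ring]
      exact hR.per_add ih (hR.per_neg h)

theorem per_least (hR : Compat g R) {a : ℕ} (ha : IsLeast {n : ℕ | 0 < n ∧ R (g ^ n • x) x} a) (n : ℤ) :
    R (g ^ n • x) x ↔ (a : ℤ) ∣ n := by
  obtain ⟨⟨hapos, haR⟩, hlb⟩ := ha
  have haZ : R (g ^ (a : ℤ) • x) x := by rw [zpow_natCast]; exact haR
  constructor
  · intro h
    have hrem : R (g ^ (n % (a : ℤ)) • x) x := by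
      have h2 := hR.per_add h (hR.per_mul haZ (-(n / (a : ℤ))))
      rwa [show n + -(n / (a : ℤ)) * (a : ℤ) = n % (a : ℤ) by rw [Int.emod_def]; ring] at h2
    by_contra hdvd
    have h0 : n % (a : ℤ) ≠ 0 := fun h0 => hdvd (Int.dvd_of_emod_eq_zero h0)
    have h1 : 0 ≤ n % (a : ℤ) := Int.emod_nonneg n (by exact_mod_cast hapos.ne')
    have h2 : n % (a : ℤ) < a := Int.emod_lt_of_pos n (by exact_mod_cast hapos)
    have hmem : (n % (a : ℤ)).toNat ∈ {n : ℕ | 0 < n ∧ R (g ^ n • x) x} := by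
      refine ⟨by omega, ?_⟩
      rw [← zpow_natCast, Int.toNat_of_nonneg h1]
      exact hrem
    have := hlb hmem
    omega
  · rintro ⟨k, rfl⟩
    rw [mul_comm]
    exact hR.per_mul haZ k

theorem per_transfer (hR : Compat g R) {k : ℤ} (hk : R (g ^ k • x) z) (n : ℤ) :
    R (g ^ n • z) z ↔ R (g ^ n • x) x := by
  constructor
  · intro h
    have h1 := hR.comp n hk
    rw [zp] at h1
    have h2 : R (g ^ (n + k) • x) (g ^ k • x) := hR.trans (hR.trans h1 h) (hR.symm hk)
    have h3 := hR.comp (-k) h2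
    rw [zp, zp, show -k + (n + k) = n by ring, neg_add_cancel, zpow_zero, one_smul] at h3
    exact h3
  · intro h
    have h1 := hR.comp k h
    rw [zp] at h1
    have h2 : R (g ^ (k + n) • x) z := hR.trans h1 hk
    have h3 := hR.comp n hk
    rw [zp, show n + k = k + n by ring] at h3
    exact hR.trans (hR.symm h3) h2

theorem rel_shift (hR : Compat g R) (u : Ω) (n m : ℤ) : R (g ^ n • u) (g ^ m • u) ↔ R (g ^ (n - m) • u) u := by
  constructor
  · intro h
    have h1 := hR.comp (-m) h
    rwa [zp, zp, show -m + n = n - m by ring, neg_add_cancel, zpow_zero, one_smul] at h1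
  · intro h
    have h1 := hR.comp m h
    rwa [zp, show m + (n - m) = n by ring] at h1

end Compat

theorem compat_eq (g : G) : Compat g (Eq : Ω → Ω → Prop) :=
  ⟨fun _ => rfl, Eq.symm, Eq.trans, fun n _ _ h => by rw [h]⟩

theorem card_of_cyclic {α : Type*} {c : ℕ} (hc : 0 < c) (q : ℤ → α)
    (hq : ∀ n m : ℤ, q n = q m ↔ (c : ℤ) ∣ n - m) (hs : ∀ t, ∃ n, q n = t) :
    Nat.card α = c := by
  haveI : NeZero c := ⟨hc.ne'⟩
  have hbij : Function.Bijective (fun k : ZMod c => q ((k.val : ℤ))) := by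
    constructor
    · intro i j hij
      have hd := (hq _ _).mp hij
      have hi := ZMod.val_lt i
      have hj := ZMod.val_lt j
      have hij' : i.val = j.val := by
        have h0 : ((i.val : ℤ) - j.val) = 0 :=
          Int.eq_zero_of_abs_lt_dvd hd (abs_lt.mpr ⟨by omega, by omega⟩)
        omega
      exact ZMod.val_injective c hij'
    · intro t
      obtain ⟨n, hn⟩ := hs t
      have h1 : 0 ≤ n % (c : ℤ) := Int.emod_nonneg n (by exact_mod_cast hc.ne')
      have h2 : n % (c : ℤ) < c := Int.emod_lt_of_pos n (by exact_mod_cast hc)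
      refine ⟨(((n % (c : ℤ)).toNat : ℕ) : ZMod c), ?_⟩
      have hv : ((((n % (c : ℤ)).toNat : ℕ) : ZMod c)).val = (n % (c : ℤ)).toNat :=
        ZMod.val_cast_of_lt (by omega)
      show q ((((((n % (c : ℤ)).toNat : ℕ) : ZMod c)).val : ℤ)) = t
      rw [hv, ← hn]
      apply (hq _ _).mpr
      refine ⟨-(n / (c : ℤ)), ?_⟩
      rw [Int.toNat_of_nonneg h1, Int.emod_def]
      ring
  calc Nat.card α = Nat.card (ZMod c) := (Nat.card_congr (Equiv.ofBijective _ hbij)).symm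
    _ = c := Nat.card_zmod c

end Stmt13Aux

open Stmt13Aux

/-- Case 3: `g` has two orbits on the finite transitive `G`-set `Ω`; `φ, ψ` are
congruences with trivial meet and trivial join; `g` has two orbits (of lengths
`a₁, a₂`) on `Ω/φ` and is a single cycle on `Ω/ψ` (of size `b`).  Then
`gcd(a₁,b) = gcd(a₂,b) = 1` and the canonical map `Ω → Ω/φ × Ω/ψ` is an
isomorphism of `G`-sets. -/
theorem stmt13 {G Ω : Type*} [Group G] [MulAction G Ω] [Finite Ω]
    [MulAction.IsPretransitive G Ω] (g : G)
    (hg : Nat.card (Quotient (MulAction.orbitRel (Subgroup.zpowers g) Ω)) = 2)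
    (φ ψ : Setoid Ω)
    (hφ : ∀ (σ : G) (x y : Ω), φ.r x y → φ.r (σ • x) (σ • y))
    (hψ : ∀ (σ : G) (x y : Ω), ψ.r x y → ψ.r (σ • x) (σ • y))
    (hφbot : φ ≠ ⊥) (hφtop : φ ≠ ⊤) (hψbot : ψ ≠ ⊥) (hψtop : ψ ≠ ⊤)
    (hmeet : φ ⊓ ψ = ⊥) (hjoin : φ ⊔ ψ = ⊤)
    (a₁ a₂ b : ℕ)
    -- `g` has exactly two orbits on `Ω/φ`, of lengths `a₁` and `a₂`:
    (h2φ : ∃ x y : Ω, (¬ ∃ n : ℤ, φ.r (g ^ n • x) y) ∧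
      (∀ z : Ω, (∃ n : ℤ, φ.r (g ^ n • x) z) ∨ (∃ n : ℤ, φ.r (g ^ n • y) z)) ∧
      IsLeast {n : ℕ | 0 < n ∧ φ.r (g ^ n • x) x} a₁ ∧
      IsLeast {n : ℕ | 0 < n ∧ φ.r (g ^ n • y) y} a₂)
    -- `g` is a single cycle on `Ω/ψ`, of length `b`:
    (h1ψ : ∀ x y : Ω, ∃ n : ℤ, ψ.r (g ^ n • x) y)
    (hb : b = Nat.card (Quotient ψ)) :
    Nat.gcd a₁ b = 1 ∧ Nat.gcd a₂ b = 1 ∧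
      Function.Bijective (fun x : Ω => (Quotient.mk φ x, Quotient.mk ψ x)) := by
  classical
  obtain ⟨x, y, hxy, hcov, ha₁, ha₂⟩ := h2φ
  have cφ : Compat g φ.r := ⟨φ.iseqv.refl, fun h => φ.iseqv.symm h,
    fun h h' => φ.iseqv.trans h h', fun n _ _ h => hφ (g ^ n) _ _ h⟩
  have cψ : Compat g ψ.r := ⟨ψ.iseqv.refl, fun h => ψ.iseqv.symm h,
    fun h h' => ψ.iseqv.trans h h', fun n _ _ h => hψ (g ^ n) _ _ h⟩
  have ceq : Compat g (Eq : Ω → Ω → Prop) := compat_eq g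
  have a₁pos : 0 < a₁ := ha₁.1.1
  have a₂pos : 0 < a₂ := ha₂.1.1
  have hper₁ : ∀ n : ℤ, φ.r (g ^ n • x) x ↔ (a₁ : ℤ) ∣ n := cφ.per_least ha₁
  have hper₂ : ∀ n : ℤ, φ.r (g ^ n • y) y ↔ (a₂ : ℤ) ∣ n := cφ.per_least ha₂
  -- finiteness: positive equality-period exists
  have hfin : ∀ z : Ω, ∃ n : ℕ, 0 < n ∧ g ^ n • z = z := by
    intro z
    obtain ⟨i, j, hne, hij⟩ :=
      Finite.exists_ne_map_eq_of_infinite (fun n : ℕ => g ^ n • z)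
    rcases hne.lt_or_gt with h | h
    · refine ⟨j - i, by omega, ?_⟩
      have : g ^ (j : ℤ) • z = g ^ (i : ℤ) • z := by
        rw [zpow_natCast, zpow_natCast]; exact hij.symm
      have h2 := congrArg (fun w => g ^ (-(i : ℤ)) • w) this
      simp only [zp] at h2
      rw [show -(i : ℤ) + (j : ℤ) = ((j - i : ℕ) : ℤ) by omega, neg_add_cancel,
        zpow_zero, one_smul, zpow_natCast] at h2
      exact h2
    · refine ⟨i - j, by omega, ?_⟩
      have : g ^ (i : ℤ) • z = g ^ (j : ℤ) • z := by
        rw [zpow_natCast, zpow_natCast]; exact hij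
      have h2 := congrArg (fun w => g ^ (-(j : ℤ)) • w) this
      simp only [zp] at h2
      rw [show -(j : ℤ) + (i : ℤ) = ((i - j : ℕ) : ℤ) by omega, neg_add_cancel,
        zpow_zero, one_smul, zpow_natCast] at h2
      exact h2
  -- least positive ψ-period of x
  have hψne : ({n : ℕ | 0 < n ∧ ψ.r (g ^ n • x) x}).Nonempty := by
    obtain ⟨n, hn, he⟩ := hfin x
    exact ⟨n, hn, by rw [he]⟩
  obtain ⟨c, hcls⟩ : ∃ c, IsLeast {n : ℕ | 0 < n ∧ ψ.r (g ^ n • x) x} c :=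
    ⟨sInf _, Nat.sInf_mem hψne, fun m hm => Nat.sInf_le hm⟩
  have cpos : 0 < c := hcls.1.1
  have hperψx : ∀ n : ℤ, ψ.r (g ^ n • x) x ↔ (c : ℤ) ∣ n := cψ.per_least hcls
  -- b = c
  have hbc : b = c := by
    rw [hb]
    refine card_of_cyclic cpos (fun n => Quotient.mk ψ (g ^ n • x)) (fun n m => ?_) ?_
    · constructor
      · intro h
        exact (Iff.trans (cψ.rel_shift x n m) (hperψx (n - m))).mp (Quotient.exact h)
      · intro h
        exact Quotient.sound ((Iff.trans (cψ.rel_shift x n m) (hperψx (n - m))).mpr h)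
    · intro t
      obtain ⟨z, rfl⟩ := Quotient.exists_rep t
      obtain ⟨n, hn⟩ := h1ψ x z
      exact ⟨n, Quotient.sound hn⟩
  subst hbc
  -- now b := b; rename for clarity
  have bpos : 0 < b := cpos
  have hperψ : ∀ (z : Ω) (n : ℤ), ψ.r (g ^ n • z) z ↔ (b : ℤ) ∣ n := by
    intro z n
    obtain ⟨k, hk⟩ := h1ψ x z
    rw [cψ.per_transfer hk n]
    exact hperψx n
  -- the two g-orbits on Ω
  have hneq : (Quotient.mk'' x : Quotient (MulAction.orbitRel (Subgroup.zpowers g) Ω)) ≠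
      Quotient.mk'' y := by
    intro h
    have hrel := Quotient.eq''.mp h
    rw [MulAction.orbitRel_apply] at hrel
    obtain ⟨m, hm⟩ := MulAction.mem_orbit_iff.mp hrel
    obtain ⟨n, hn⟩ := Subgroup.mem_zpowers_iff.mp m.2
    have hm' : g ^ n • y = x := by rw [hn]; exact hm
    refine hxy ⟨-n, ?_⟩
    have : g ^ (-n) • x = y := by
      rw [← hm', zp, neg_add_cancel, zpow_zero, one_smul]
    rw [this]
  have horb : ∀ z : Ω, (∃ n : ℤ, g ^ n • x = z) ∨ (∃ n : ℤ, g ^ n • y = z) := by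
    intro z
    obtain ⟨u, v, huv, huniv⟩ := Nat.card_eq_two_iff.mp hg
    have hmem : ∀ s : Quotient (MulAction.orbitRel (Subgroup.zpowers g) Ω),
        s = u ∨ s = v := by
      intro s
      have : s ∈ ({u, v} : Set _) := by rw [huniv]; trivial
      simpa using this
    have hzxy : (Quotient.mk'' z : Quotient (MulAction.orbitRel (Subgroup.zpowers g) Ω)) =
        Quotient.mk'' x ∨ (Quotient.mk'' z : Quotient (MulAction.orbitRel
        (Subgroup.zpowers g) Ω)) = Quotient.mk'' y := by
      rcases hmem (Quotient.mk'' z) with h1 | h1 <;>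
        rcases hmem (Quotient.mk'' x) with h2 | h2 <;>
        rcases hmem (Quotient.mk'' y) with h3 | h3 <;> simp_all
    rcases hzxy with h | h
    · left
      have hrel := Quotient.eq''.mp h
      rw [MulAction.orbitRel_apply] at hrel
      obtain ⟨m, hm⟩ := MulAction.mem_orbit_iff.mp hrel
      obtain ⟨n, hn⟩ := Subgroup.mem_zpowers_iff.mp m.2
      exact ⟨n, by rw [hn]; exact hm⟩
    · right
      have hrel := Quotient.eq''.mp h
      rw [MulAction.orbitRel_apply] at hrel
      obtain ⟨m, hm⟩ := MulAction.mem_orbit_iff.mp hrel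
      obtain ⟨n, hn⟩ := Subgroup.mem_zpowers_iff.mp m.2
      exact ⟨n, by rw [hn]; exact hm⟩
  -- x-side and y-side are φ-disjoint
  have hdisj : ∀ (n m : ℤ) (z : Ω), φ.r (g ^ n • x) z → φ.r (g ^ m • y) z → False := by
    intro n m z h1 h2
    refine hxy ⟨n - m, ?_⟩
    have h3 : φ.r (g ^ n • x) (g ^ m • y) := cφ.trans h1 (cφ.symm h2)
    have h4 := cφ.comp (-m) h3
    rwa [zp, zp, show -m + n = n - m by ring, neg_add_cancel, zpow_zero, one_smul] at h4
  have horbdisj : ∀ (n m : ℤ), g ^ n • x = g ^ m • y → False := by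
    intro n m h
    exact hdisj n m (g ^ m • y) (by rw [h]) (φ.iseqv.refl _)
  -- gcd(a₁, gcd(a₂, b)) = 1 via the join
  have hdvd₁x : ∀ p : ℤ, g ^ p • x = x → (a₁ : ℤ) ∣ p := by
    intro p hp
    exact (hper₁ p).mp (by rw [hp])
  have hdvd₂y : ∀ p : ℤ, g ^ p • y = y → (a₂ : ℤ) ∣ p := by
    intro p hp
    exact (hper₂ p).mp (by rw [hp])
  set d := Nat.gcd a₁ (Nat.gcd a₂ b) with hd
  have hdpos : 0 < d := Nat.gcd_pos_of_pos_left _ a₁pos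
  have hda₁ : (d : ℤ) ∣ (a₁ : ℤ) := Int.natCast_dvd_natCast.mpr (Nat.gcd_dvd_left _ _)
  have hda₂ : (d : ℤ) ∣ (a₂ : ℤ) :=
    Int.natCast_dvd_natCast.mpr ((Nat.gcd_dvd_right _ _).trans (Nat.gcd_dvd_left _ _))
  have hdc : (d : ℤ) ∣ (b : ℤ) :=
    Int.natCast_dvd_natCast.mpr ((Nat.gcd_dvd_right _ _).trans (Nat.gcd_dvd_right _ _))
  have hcastd : ∀ p q : ℤ, (d : ℤ) ∣ p - q → ((p : ZMod d) = (q : ZMod d)) := by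
    intro p q hdv
    rw [ZMod.intCast_eq_intCast_iff, Int.modEq_iff_dvd]
    exact dvd_sub_comm.mp hdv
  obtain ⟨e, he⟩ := h1ψ x y
  set f : Ω → ZMod d := fun z =>
    if h : ∃ n : ℤ, g ^ n • x = z then ((h.choose : ℤ) : ZMod d)
    else ((((horb z).resolve_left h).choose + e : ℤ) : ZMod d) with hf
  have hfx : ∀ n : ℤ, f (g ^ n • x) = ((n : ℤ) : ZMod d) := by
    intro n
    have hex : ∃ m : ℤ, g ^ m • x = g ^ n • x := ⟨n, rfl⟩
    have h1 : f (g ^ n • x) = ((hex.choose : ℤ) : ZMod d) := by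
      rw [hf]; exact dif_pos hex
    rw [h1]
    apply hcastd
    have hm := hex.choose_spec
    have h2 : g ^ (hex.choose - n) • x = x := by
      have h3 := congrArg (fun w => g ^ (-n) • w) hm
      simpa only [zp, show -n + hex.choose = hex.choose - n by ring, neg_add_cancel,
        zpow_zero, one_smul] using h3
    exact hda₁.trans (hdvd₁x _ h2)
  have hfy : ∀ n : ℤ, f (g ^ n • y) = (((n + e : ℤ)) : ZMod d) := by
    intro n
    have hnex : ¬ ∃ m : ℤ, g ^ m • x = g ^ n • y := by
      rintro ⟨m, hm⟩
      exact horbdisj m n hm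
    have hch := ((horb (g ^ n • y)).resolve_left hnex).choose_spec
    have h1 : f (g ^ n • y) =
        ((((horb (g ^ n • y)).resolve_left hnex).choose + e : ℤ) : ZMod d) := by
      rw [hf]; exact dif_neg hnex
    rw [h1]
    apply hcastd
    have h2 : g ^ (((horb (g ^ n • y)).resolve_left hnex).choose - n) • y = y := by
      have h3 := congrArg (fun w => g ^ (-n) • w) hch
      simpa only [zp,
        show -n + ((horb (g ^ n • y)).resolve_left hnex).choose
          = ((horb (g ^ n • y)).resolve_left hnex).choose - n by ring,
        neg_add_cancel, zpow_zero, one_smul] using h3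
    have h4 := hda₂.trans (hdvd₂y _ h2)
    have : (((horb (g ^ n • y)).resolve_left hnex).choose + e) - (n + e)
        = ((horb (g ^ n • y)).resolve_left hnex).choose - n := by ring
    rwa [this]
  -- φ ⊔ ψ ≤ ker f
  have hφker : φ ≤ Setoid.ker f := by
    rw [Setoid.le_def]
    intro z w h
    rw [Setoid.ker_def]
    rcases horb z with ⟨n, rfl⟩ | ⟨n, rfl⟩ <;> rcases horb w with ⟨m, rfl⟩ | ⟨m, rfl⟩
    · rw [hfx, hfx]
      apply hcastd
      refine hda₁.trans ((hper₁ (n - m)).mp ?_)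
      exact (cφ.rel_shift x n m).mp h
    · exact (hdisj n m _ h (φ.iseqv.refl _)).elim
    · exact (hdisj m n _ (cφ.symm h) (φ.iseqv.refl _)).elim
    · rw [hfy, hfy]
      apply hcastd
      have h5 : (a₂ : ℤ) ∣ n - m := (hper₂ (n - m)).mp ((cφ.rel_shift y n m).mp h)
      have : (n + e) - (m + e) = n - m := by ring
      rw [this]
      exact hda₂.trans h5
  have hψker : ψ ≤ Setoid.ker f := by
    rw [Setoid.le_def]
    intro z w h
    rw [Setoid.ker_def]
    have hye : ∀ m : ℤ, ψ.r (g ^ (m + e) • x) (g ^ m • y) := by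
      intro m
      have h1 := cψ.comp m he
      rwa [zp] at h1
    rcases horb z with ⟨n, rfl⟩ | ⟨n, rfl⟩ <;> rcases horb w with ⟨m, rfl⟩ | ⟨m, rfl⟩
    · rw [hfx, hfx]
      apply hcastd
      refine hdc.trans ((hperψx (n - m)).mp ?_)
      exact (cψ.rel_shift x n m).mp h
    · rw [hfx, hfy]
      apply hcastd
      have h1 : ψ.r (g ^ n • x) (g ^ (m + e) • x) := cψ.trans h (cψ.symm (hye m))
      exact hdc.trans ((hperψx (n - (m + e))).mp ((cψ.rel_shift x n (m + e)).mp h1))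
    · rw [hfy, hfx]
      apply hcastd
      have h1 : ψ.r (g ^ (n + e) • x) (g ^ m • x) := cψ.trans (hye n) h
      exact hdc.trans ((hperψx ((n + e) - m)).mp ((cψ.rel_shift x (n + e) m).mp h1))
    · rw [hfy, hfy]
      apply hcastd
      have h1 : ψ.r (g ^ (n - m) • y) y := (cψ.rel_shift y n m).mp h
      have h2 : (b : ℤ) ∣ n - m := (hperψ y (n - m)).mp h1
      have : (n + e) - (m + e) = n - m := by ring
      rw [this]
      exact hdc.trans h2
  have hsup : (⊤ : Setoid Ω) ≤ Setoid.ker f := hjoin ▸ sup_le hφker hψker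
  have hd1 : d = 1 := by
    have htop : (⊤ : Setoid Ω).r x (g • x) := trivial
    have hcon : f x = f (g • x) := Setoid.ker_def.mp (Setoid.le_def.mp hsup htop)
    have h0 : f x = ((0 : ℤ) : ZMod d) := by
      have : x = g ^ (0 : ℤ) • x := by rw [zpow_zero, one_smul]
      rw [this, hfx]
    have h1 : f (g • x) = ((1 : ℤ) : ZMod d) := by
      have : g • x = g ^ (1 : ℤ) • x := by rw [zpow_one]
      rw [this, hfx]
    rw [h0, h1] at hcon
    have hdvd : (d : ℤ) ∣ 1 := by
      have := (ZMod.intCast_eq_intCast_iff _ _ _).mp hcon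
      rw [Int.modEq_iff_dvd] at this
      simpa using this
    have : d ∣ 1 := by exact_mod_cast hdvd
    exact Nat.dvd_one.mp this
  -- equality periods (cycle lengths of g on Ω)
  have hl : ∀ z : Ω, ∃ l : ℕ, IsLeast {n : ℕ | 0 < n ∧ g ^ n • z = z} l := by
    intro z
    obtain ⟨n, hn, hne⟩ := hfin z
    exact ⟨sInf _, Nat.sInf_mem ⟨n, hn, hne⟩, fun m hm => Nat.sInf_le hm⟩
  obtain ⟨l₁, hl₁⟩ := hl x
  obtain ⟨l₂, hl₂⟩ := hl y
  have l₁pos : 0 < l₁ := hl₁.1.1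
  have l₂pos : 0 < l₂ := hl₂.1.1
  have hperl₁ : ∀ n : ℤ, g ^ n • x = x ↔ (l₁ : ℤ) ∣ n := ceq.per_least hl₁
  have hperl₂ : ∀ n : ℤ, g ^ n • y = y ↔ (l₂ : ℤ) ∣ n := ceq.per_least hl₂
  have hl₁x : g ^ (l₁ : ℤ) • x = x := (hperl₁ _).mpr dvd_rfl
  have hl₂y : g ^ (l₂ : ℤ) • y = y := (hperl₂ _).mpr dvd_rfl
  have ha₁l₁ : a₁ ∣ l₁ := by
    have := (hper₁ (l₁ : ℤ)).mp (by rw [hl₁x])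
    exact_mod_cast this
  have ha₂l₂ : a₂ ∣ l₂ := by
    have := (hper₂ (l₂ : ℤ)).mp (by rw [hl₂y])
    exact_mod_cast this
  have hcl₁ : b ∣ l₁ := by
    have := (hperψx (l₁ : ℤ)).mp (by rw [hl₁x])
    exact_mod_cast this
  have hcl₂ : b ∣ l₂ := by
    have := (hperψ y (l₂ : ℤ)).mp (by rw [hl₂y])
    exact_mod_cast this
  -- meet is trivial ⇒ l = lcm
  have hboteq : ∀ z w : Ω, φ.r z w → ψ.r z w → z = w := by
    intro z w h1 h2
    have h3 : (φ ⊓ ψ).r z w := ⟨h1, h2⟩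
    rw [hmeet] at h3
    exact h3
  have hl₁lcm : l₁ = Nat.lcm a₁ b := by
    refine Nat.dvd_antisymm ?_ (Nat.lcm_dvd ha₁l₁ hcl₁)
    have h1 : φ.r (g ^ ((Nat.lcm a₁ b : ℕ) : ℤ) • x) x :=
      (hper₁ _).mpr (Int.natCast_dvd_natCast.mpr (Nat.dvd_lcm_left _ _))
    have h2 : ψ.r (g ^ ((Nat.lcm a₁ b : ℕ) : ℤ) • x) x :=
      (hperψx _).mpr (Int.natCast_dvd_natCast.mpr (Nat.dvd_lcm_right _ _))
    have h3 := hboteq _ _ h1 h2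
    have := (hperl₁ _).mp h3
    exact_mod_cast this
  have hl₂lcm : l₂ = Nat.lcm a₂ b := by
    refine Nat.dvd_antisymm ?_ (Nat.lcm_dvd ha₂l₂ hcl₂)
    have h1 : φ.r (g ^ ((Nat.lcm a₂ b : ℕ) : ℤ) • y) y :=
      (hper₂ _).mpr (Int.natCast_dvd_natCast.mpr (Nat.dvd_lcm_left _ _))
    have h2 : ψ.r (g ^ ((Nat.lcm a₂ b : ℕ) : ℤ) • y) y :=
      (hperψ y _).mpr (Int.natCast_dvd_natCast.mpr (Nat.dvd_lcm_right _ _))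
    have h3 := hboteq _ _ h1 h2
    have := (hperl₂ _).mp h3
    exact_mod_cast this
  -- φ-class cardinalities
  have hclass : ∀ (z : Ω) (a l : ℕ), 0 < a → 0 < l → a ∣ l →
      (∀ n : ℤ, φ.r (g ^ n • z) z ↔ (a : ℤ) ∣ n) →
      (∀ n : ℤ, g ^ n • z = z ↔ (l : ℤ) ∣ n) →
      (∀ w : Ω, φ.r w z → ∃ n : ℤ, g ^ n • z = w) →
      Set.ncard {w | φ.r w z} = l / a := by
    intro z a l hapos hlpos hal hpera hperl hcover
    rw [← Nat.card_coe_set_eq]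
    have hqmem : ∀ k : ℤ, φ.r (g ^ ((a : ℤ) * k) • z) z := fun k =>
      (hpera _).mpr ⟨k, rfl⟩
    have hposq : 0 < l / a := Nat.div_pos (Nat.le_of_dvd hlpos hal) hapos
    refine card_of_cyclic hposq
      (fun k => (⟨g ^ ((a : ℤ) * k) • z, hqmem k⟩ : {w | φ.r w z})) (fun n m => ?_) ?_
    · rw [Subtype.mk.injEq]
      rw [ceq.rel_shift z ((a : ℤ) * n) ((a : ℤ) * m)]
      rw [show (a : ℤ) * n - (a : ℤ) * m = (a : ℤ) * (n - m) by ring]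
      rw [hperl]
      obtain ⟨t, ht⟩ := hal
      subst ht
      have : ((a * t : ℕ) : ℤ) = (a : ℤ) * t := by push_cast; ring
      rw [this, Nat.mul_div_cancel_left t hapos]
      exact mul_dvd_mul_iff_left (by exact_mod_cast hapos.ne' : (a : ℤ) ≠ 0)
    · rintro ⟨w, hw⟩
      obtain ⟨n, hn⟩ := hcover w hw
      have hφn : φ.r (g ^ n • z) z := by rw [hn]; exact hw
      obtain ⟨k, hk⟩ := (hpera n).mp hφn
      refine ⟨k, Subtype.ext ?_⟩
      show g ^ ((a : ℤ) * k) • z = w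
      rw [← hk, hn]
  have hcov₁ : ∀ w : Ω, φ.r w x → ∃ n : ℤ, g ^ n • x = w := by
    intro w hw
    rcases horb w with ⟨n, hn⟩ | ⟨n, hn⟩
    · exact ⟨n, hn⟩
    · exact (hdisj 0 n x
        (by rw [zpow_zero, one_smul]) (by rw [hn]; exact hw)).elim
  have hcov₂ : ∀ w : Ω, φ.r w y → ∃ n : ℤ, g ^ n • y = w := by
    intro w hw
    rcases horb w with ⟨n, hn⟩ | ⟨n, hn⟩
    · exact (hdisj n 0 y
        (by rw [hn]; exact hw) (by rw [zpow_zero, one_smul])).elim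
    · exact ⟨n, hn⟩
  have hC₁ : Set.ncard {w | φ.r w x} = l₁ / a₁ :=
    hclass x a₁ l₁ a₁pos l₁pos ha₁l₁ hper₁ hperl₁ hcov₁
  have hC₂ : Set.ncard {w | φ.r w y} = l₂ / a₂ :=
    hclass y a₂ l₂ a₂pos l₂pos ha₂l₂ hper₂ hperl₂ hcov₂
  -- transitivity: the two classes have the same size
  obtain ⟨σ, hσ⟩ := MulAction.exists_smul_eq G x y
  have himg : (σ • ·) '' {w | φ.r w x} = {w | φ.r w y} := by
    ext w
    constructor
    · rintro ⟨z, hz, rfl⟩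
      have := hφ σ _ _ hz
      rwa [hσ] at this
    · intro hw
      refine ⟨σ⁻¹ • w, ?_, smul_inv_smul σ w⟩
      have := hφ σ⁻¹ _ _ hw
      rwa [← hσ, inv_smul_smul] at this
  have hkk : l₁ / a₁ = l₂ / a₂ := by
    rw [← hC₁, ← hC₂, ← himg,
      Set.ncard_image_of_injective _ (MulAction.injective σ)]
  -- arithmetic: gcd(a₁,b) = gcd(a₂,b)
  have hkpos : 0 < l₁ / a₁ := Nat.div_pos (Nat.le_of_dvd l₁pos ha₁l₁) a₁pos
  have hl₁k : l₁ = a₁ * (l₁ / a₁) := (Nat.mul_div_cancel' ha₁l₁).symm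
  have hl₂k : l₂ = a₂ * (l₁ / a₁) := by
    rw [hkk]; exact (Nat.mul_div_cancel' ha₂l₂).symm
  have hb₁ : b = Nat.gcd a₁ b * (l₁ / a₁) := by
    have h1 : a₁ * b = Nat.gcd a₁ b * l₁ := by rw [hl₁lcm]; exact (Nat.gcd_mul_lcm a₁ b).symm
    rw [hl₁k] at h1
    have h2 : a₁ * b = a₁ * (Nat.gcd a₁ b * (l₁ / a₁)) := by rw [h1]; ring
    exact Nat.eq_of_mul_eq_mul_left a₁pos h2
  have hb₂ : b = Nat.gcd a₂ b * (l₁ / a₁) := by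
    have h1 : a₂ * b = Nat.gcd a₂ b * l₂ := by rw [hl₂lcm]; exact (Nat.gcd_mul_lcm a₂ b).symm
    rw [hl₂k] at h1
    have h2 : a₂ * b = a₂ * (Nat.gcd a₂ b * (l₁ / a₁)) := by rw [h1]; ring
    exact Nat.eq_of_mul_eq_mul_left a₂pos h2
  have hgcdeq : Nat.gcd a₁ b = Nat.gcd a₂ b := by
    have := hb₁.symm.trans hb₂
    exact Nat.eq_of_mul_eq_mul_right hkpos this
  have hg₁ : Nat.gcd a₁ b = 1 := by
    have hdvd : Nat.gcd a₁ b ∣ d :=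
      Nat.dvd_gcd (Nat.gcd_dvd_left _ _) (dvd_of_eq hgcdeq)
    rw [hd1] at hdvd
    exact Nat.dvd_one.mp hdvd
  have hg₂ : Nat.gcd a₂ b = 1 := by rw [← hgcdeq]; exact hg₁
  refine ⟨hg₁, hg₂, ?_, ?_⟩
  · -- injectivity
    intro z w h
    have h1 : Quotient.mk φ z = Quotient.mk φ w := congrArg Prod.fst h
    have h2 : Quotient.mk ψ z = Quotient.mk ψ w := congrArg Prod.snd h
    exact hboteq z w (Quotient.exact h1) (Quotient.exact h2)
  · -- surjectivity
    rintro ⟨u', v'⟩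
    obtain ⟨u, rfl⟩ := Quotient.exists_rep u'
    obtain ⟨v, rfl⟩ := Quotient.exists_rep v'
    obtain ⟨n, hn⟩ := h1ψ u v
    have key : ∀ (w : Ω) (a : ℕ), Nat.gcd a b = 1 →
        (∀ m : ℤ, φ.r (g ^ m • w) w ↔ (a : ℤ) ∣ m) →
        ∃ z : Ω, φ.r z w ∧ ψ.r z v := by
      intro w a hgcd hpera
      obtain ⟨n', hn'⟩ := h1ψ w v
      have hbez : (1 : ℤ) = a * Nat.gcdA a b + b * Nat.gcdB a b := by
        have := Nat.gcd_eq_gcd_ab a b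
        rw [hgcd] at this
        exact_mod_cast this
      set m : ℤ := n' * ((a : ℤ) * Nat.gcdA a b) with hm
      have hadvd : (a : ℤ) ∣ m := ⟨n' * Nat.gcdA a b, by rw [hm]; ring⟩
      have hcdvd : (b : ℤ) ∣ m - n' := by
        refine ⟨-(n' * Nat.gcdB a b), ?_⟩
        have : m - n' = n' * ((a : ℤ) * Nat.gcdA a b - 1) := by rw [hm]; ring
        rw [this, show (a : ℤ) * Nat.gcdA a b - 1 = -((b : ℤ) * Nat.gcdB a b) by
          rw [eq_neg_iff_add_eq_zero]; linarith [hbez]]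
        ring
      refine ⟨g ^ m • w, (hpera m).mpr hadvd, ?_⟩
      have h1 : ψ.r (g ^ (m - n') • (g ^ n' • w)) (g ^ n' • w) :=
        (hperψ (g ^ n' • w) (m - n')).mpr hcdvd
      rw [zp, show m - n' + n' = m by ring] at h1
      exact cψ.trans h1 hn'
    rcases horb u with ⟨t, rfl⟩ | ⟨t, rfl⟩
    · have hperu : ∀ m : ℤ, φ.r (g ^ m • (g ^ t • x)) (g ^ t • x) ↔ (a₁ : ℤ) ∣ m := by
        intro m
        rw [cφ.per_transfer (show φ.r (g ^ t • x) (g ^ t • x) from φ.iseqv.refl _) m]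
        exact hper₁ m
      obtain ⟨z, hz₁, hz₂⟩ := key (g ^ t • x) a₁ hg₁ hperu
      exact ⟨z, by
        show (Quotient.mk φ z, Quotient.mk ψ z) = _
        rw [Prod.mk.injEq]
        exact ⟨Quotient.sound hz₁, Quotient.sound hz₂⟩⟩
    · have hperu : ∀ m : ℤ, φ.r (g ^ m • (g ^ t • y)) (g ^ t • y) ↔ (a₂ : ℤ) ∣ m := by
        intro m
        rw [cφ.per_transfer (show φ.r (g ^ t • y) (g ^ t • y) from φ.iseqv.refl _) m]
        exact hper₂ m
      obtain ⟨z, hz₁, hz₂⟩ := key (g ^ t • y) a₂ hg₂ hperu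
      exact ⟨z, by
        show (Quotient.mk φ z, Quotient.mk ψ z) = _
        rw [Prod.mk.injEq]
        exact ⟨Quotient.sound hz₁, Quotient.sound hz₂⟩⟩
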